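/- For n ≥ 2 and all integers 0 ≤ i ≤ j with i + j ≤ 2^r: N_r(j + i) − N_r(j) ≥ (n−1)·N_r(i). -/

import Mathlib

/-- Whether the `j`-th coordinate of the edge `e` equals the distinguished vertex
(the first vertex of its side, representing `v_{j+1} = 1`). -/
def vcond {n r : ℕ} (e : Fin r → Fin n) (j : ℕ) : Bool :=
  if h : j < r then decide ((e ⟨j, h⟩ : ℕ) = 0) else false

/-- The nested condition `v_{j+1} ∈ e σ₁ (v_{j+2} ∈ e σ₂ (⋯))` determined by a
sequence `σ` over `{∧, ∨}` (where `false` encodes `∧` and `true` encodes `∨`). -/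
def edgeCond {n r : ℕ} (e : Fin r → Fin n) : ℕ → List Bool → Bool
  | j, [] => vcond e j
  | j, false :: s => vcond e j && edgeCond e (j + 1) s
  | j, true :: s => vcond e j || edgeCond e (j + 1) s

/-- `F_r(σ)`: the set of edges of `[n]^r` satisfying the nested condition given by `σ`. -/
def Fset (n r : ℕ) (σ : List Bool) : Finset (Fin r → Fin n) :=
  Finset.univ.filter (fun e => edgeCond e 0 σ = true)

/-- `f_r(σ) = |F_r(σ)|`. -/
def fval (n r : ℕ) (σ : List Bool) : ℕ := (Fset n r σ).card

/-- `Ψ_r`: the sequences over `{∧, ∨}` of length at most `r - 1`. -/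
def PsiSet (r : ℕ) : Finset (List Bool) :=
  (Finset.range r).biUnion (fun m => (Finset.univ : Finset (Fin m → Bool)).image List.ofFn)

/-- The set of values `{f_r(σ) : σ ∈ Σ_r}`, where `f_r(α) = 0` and `f_r(ω) = n ^ r`. -/
def Nvals (n r : ℕ) : Finset ℕ :=
  insert 0 (insert (n ^ r) ((PsiSet r).image (fval n r)))

/-- `N_r(i)`: the `(i+1)`-st smallest element of `{f_r(σ) : σ ∈ Σ_r}`. -/
def Nseq (n r i : ℕ) : ℕ := (Finset.sort (Nvals n r) (· ≤ ·)).getD i 0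

def cfun (n : ℕ) : List Bool → ℕ
  | [] => 1
  | false :: s => cfun n s
  | true :: s => n^(s.length+1) + (n-1) * cfun n s

def sc : ℕ → ℕ
  | 0 => 0
  | (k+1) => sc ((k+1)/2) + (k+1) % 2
decreasing_by exact Nat.div_lt_self (Nat.succ_pos k) one_lt_two

lemma sc_zero : sc 0 = 0 := by rw [sc]

lemma sc_succ (k : ℕ) : sc (k+1) = sc ((k+1)/2) + (k+1) % 2 := by rw [sc]

lemma sc_two_mul (m : ℕ) : sc (2*m) = sc m := by
  cases m with
  | zero => rw [Nat.mul_zero]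
  | succ k =>
    rw [show 2*(k+1) = (2*k+1)+1 by ring, sc_succ]
    have h1 : (2*k+1+1)/2 = k+1 := by omega
    have h2 : (2*k+1+1) % 2 = 0 := by omega
    rw [h1, h2, Nat.add_zero]

lemma sc_two_mul_add_one (m : ℕ) : sc (2*m+1) = sc m + 1 := by
  rw [sc_succ]
  have h1 : (2*m+1)/2 = m := by omega
  have h2 : (2*m+1) % 2 = 1 := by omega
  rw [h1, h2]

lemma sc_pos {m : ℕ} (h : 0 < m) : 0 < sc m := by
  induction m using Nat.strong_induction_on with
  | _ m ih =>
    rcases Nat.even_or_odd' m with ⟨k, rfl | rfl⟩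
    · rw [sc_two_mul]
      exact ih k (by omega) (by omega)
    · rw [sc_two_mul_add_one]; omega



def Sz (q : ℤ) (m : ℕ) : ℤ := ∑ t ∈ Finset.range m, q ^ sc t

lemma Sz_zero (q : ℤ) : Sz q 0 = 0 := by simp [Sz]

lemma Sz_succ (q : ℤ) (m : ℕ) : Sz q (m+1) = Sz q m + q ^ sc m := by
  simp [Sz, Finset.sum_range_succ]

lemma Sz_two_mul (q : ℤ) (m : ℕ) : Sz q (2*m) = (1+q) * Sz q m := by
  induction m with
  | zero => simp [Sz]
  | succ k ih =>
    rw [show 2*(k+1) = (2*k+1)+1 by ring, Sz_succ, show (2*k+1) = 2*k+1 from rfl, Sz_succ,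
      ih, Sz_succ, sc_two_mul, sc_two_mul_add_one]
    ring

lemma Sz_two_mul_add_one (q : ℤ) (m : ℕ) : Sz q (2*m+1) = (1+q) * Sz q m + q ^ sc m := by
  rw [Sz_succ, Sz_two_mul, sc_two_mul]

set_option maxHeartbeats 1600000 in
lemma key (q : ℤ) (hq : 1 ≤ q) (k : ℕ) : ∀ a b : ℕ, a + b = k → a ≤ b →
    (Sz q b + q * Sz q a ≤ Sz q (a+b)) ∧
    (Sz q b + q * Sz q a + q^(sc b) ≤ Sz q (a+b) + q^(sc (a+b))) ∧
    (Sz q b + q * Sz q a + q^(sc b) + q^(sc a) * q ≤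
      Sz q (a+b) + q^(sc (a+b)) + q^(sc (a+b+1))) ∧
    (a < b → Sz q b + q * Sz q a + q^(sc a) * q ≤ Sz q (a+b) + q^(sc (a+b))) := by
  induction k using Nat.strong_induction_on with
  | _ k ih =>
    intro a b hk hab
    have hq0 : (0:ℤ) ≤ q := by linarith
    by_cases ha0 : a = 0
    · subst ha0
      rw [Nat.zero_add, Sz_zero, sc_zero, pow_zero]
      have hb1 : 1 ≤ q ^ sc (b+1) := one_le_pow₀ hq
      refine ⟨by linarith, by linarith, ?_, ?_⟩
      · have : q ≤ q ^ sc (b+1) := by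
          calc q = q^1 := (pow_one q).symm
          _ ≤ q ^ sc (b+1) := pow_le_pow_right₀ hq (sc_pos (Nat.succ_pos b))
        linarith
      · intro hb
        have : q ≤ q ^ sc b := by
          calc q = q^1 := (pow_one q).symm
          _ ≤ q ^ sc b := pow_le_pow_right₀ hq (sc_pos hb)
        linarith
    · by_cases hab2 : a = b
      · subst hab2
        rw [show a + a = 2*a by ring, show 2*a+1 = 2*a+1 from rfl, Sz_two_mul, sc_two_mul,
          sc_two_mul_add_one, pow_succ]
        refine ⟨by linarith [Sz_two_mul q a], by linarith, by linarith, fun h => absurd h (lt_irrefl a)⟩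
      · have h0a : 0 < a := Nat.pos_of_ne_zero ha0
        have hlt : a < b := lt_of_le_of_ne hab hab2
        rcases Nat.even_or_odd' a with ⟨a', ha | ha⟩ <;>
          rcases Nat.even_or_odd' b with ⟨b', hb | hb⟩ <;> subst ha <;> subst hb
        · -- a = 2a', b = 2b'
          have hab' : a' < b' := by omega
          obtain ⟨h1, h2, h3, h4⟩ := ih (a'+b') (by omega) a' b' rfl (by omega)
          have h4' := h4 hab'
          rw [show 2*a' + 2*b' = 2*(a'+b') by ring, Sz_two_mul, Sz_two_mul, Sz_two_mul,
            sc_two_mul, sc_two_mul, sc_two_mul, show 2*(a'+b')+1 = 2*(a'+b')+1 from rfl,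
            sc_two_mul_add_one, pow_succ]
          have m1 := mul_le_mul_of_nonneg_left h1 hq0
          have m4 := mul_le_mul_of_nonneg_left h4' hq0
          have hx0 : (0:ℤ) ≤ q^(sc a') * q := by positivity
          have hxq : q^(sc a') * q ≤ q^(sc a') * q * q := le_mul_of_one_le_right hx0 hq
          refine ⟨by nlinarith, by nlinarith, by nlinarith, fun _ => by nlinarith⟩
        · -- a = 2a', b = 2b'+1
          have hab' : a' ≤ b' := by omega
          obtain ⟨h1, h2, h3, h4⟩ := ih (a'+b') (by omega) a' b' rfl hab'
          rw [show 2*a' + (2*b'+1) = 2*(a'+b')+1 by ring, Sz_two_mul, Sz_two_mul_add_one,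
            Sz_two_mul_add_one, sc_two_mul, sc_two_mul_add_one, sc_two_mul_add_one,
            show 2*(a'+b')+1+1 = 2*(a'+b'+1) by ring, sc_two_mul, pow_succ, pow_succ]
          have m1 := mul_le_mul_of_nonneg_left h1 hq0
          have m2 := mul_le_mul_of_nonneg_left h2 hq0
          have hy0 : (0:ℤ) ≤ q^(sc b') := by positivity
          have hyq : q^(sc b') ≤ q * q^(sc b') := le_mul_of_one_le_left hy0 hq
          refine ⟨by nlinarith, by nlinarith, ?_, ?_⟩
          · rcases le_total (q^(sc a') * q) (q^(sc (a'+b'+1))) with hc | hc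
            · nlinarith
            · nlinarith [h3, m2]
          · intro _
            by_cases heq : a' = b'
            · subst heq
              rw [show a' + a' = 2*a' by ring, Sz_two_mul, sc_two_mul]
              nlinarith [Sz_two_mul q a']
            · have hab'' : a' < b' := lt_of_le_of_ne hab' heq
              have h4' := h4 hab''
              have m4 := mul_le_mul_of_nonneg_left h4' hq0
              rcases le_total (q^(sc a') * q) (q^(sc b')) with hc | hc
              · nlinarith
              · have hx0 : (0:ℤ) ≤ q^(sc a') * q := by positivity
                have hxq : q^(sc a') * q ≤ q * (q^(sc a') * q) := le_mul_of_one_le_left hx0 hq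
                nlinarith
        · -- a = 2a'+1, b = 2b'
          have hab' : a' < b' := by omega
          obtain ⟨h1, h2, h3, h4⟩ := ih (a'+b') (by omega) a' b' rfl (le_of_lt hab')
          have h4' := h4 hab'
          rw [show 2*a'+1 + 2*b' = 2*(a'+b')+1 by ring, Sz_two_mul, Sz_two_mul_add_one,
            Sz_two_mul_add_one, sc_two_mul, sc_two_mul_add_one, sc_two_mul_add_one,
            show 2*(a'+b')+1+1 = 2*(a'+b'+1) by ring, sc_two_mul, pow_succ, pow_succ]
          have m1 := mul_le_mul_of_nonneg_left h1 hq0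
          have m4 := mul_le_mul_of_nonneg_left h4' hq0
          have hx0 : (0:ℤ) ≤ q^(sc a') * q := by positivity
          have hxq : q^(sc a') * q ≤ q^(sc a') * q * q := le_mul_of_one_le_right hx0 hq
          exact ⟨by nlinarith, by nlinarith, by nlinarith, fun _ => by nlinarith⟩
        · -- a = 2a'+1, b = 2b'+1
          have hab' : a' < b' := by omega
          obtain ⟨h1, h2, h3, h4⟩ := ih (a'+b') (by omega) a' b' rfl (le_of_lt hab')
          have h4' := h4 hab'
          rw [show 2*a'+1 + (2*b'+1) = 2*(a'+b'+1) by ring, Sz_two_mul, Sz_two_mul_add_one,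
            Sz_two_mul_add_one, sc_two_mul, sc_two_mul_add_one, sc_two_mul_add_one,
            show 2*(a'+b'+1)+1 = 2*(a'+b'+1)+1 from rfl, sc_two_mul_add_one,
            pow_succ, pow_succ, pow_succ]
          have hW : Sz q (a'+b'+1) = Sz q (a'+b') + q^(sc (a'+b')) := Sz_succ q (a'+b')
          rw [hW]
          have m2 := mul_le_mul_of_nonneg_left h2 hq0
          have m3 := mul_le_mul_of_nonneg_left h3 hq0
          have m4 := mul_le_mul_of_nonneg_left h4' hq0
          have hx0 : (0:ℤ) ≤ q^(sc a') * q := by positivity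
          have hxq : q^(sc a') * q ≤ q^(sc a') * q * q := le_mul_of_one_le_right hx0 hq
          refine ⟨by nlinarith, ?_, ?_, ?_⟩
          · rcases le_total (q^(sc a') * q) (q^(sc (a'+b'+1))) with hc | hc
            · nlinarith
            · nlinarith
          · rcases le_total (q^(sc a') * q * q) (q^(sc (a'+b'+1))) with hc | hc
            · nlinarith
            · nlinarith
          · intro _
            nlinarith


def phi (n i : ℕ) : ℕ := ∑ t ∈ Finset.range i, (n-1) ^ sc t

lemma phi_zero (n : ℕ) : phi n 0 = 0 := by simp [phi]

lemma phi_succ (n i : ℕ) : phi n (i+1) = phi n i + (n-1) ^ sc i := by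
  simp [phi, Finset.sum_range_succ]

lemma phi_one (n : ℕ) : phi n 1 = 1 := by
  simp [phi_succ, phi_zero, sc_zero]

lemma phi_two_mul {n : ℕ} (hn : 1 ≤ n) (m : ℕ) : phi n (2*m) = n * phi n m := by
  induction m with
  | zero => simp [phi_zero]
  | succ k ih =>
    obtain ⟨q, rfl⟩ : ∃ q, n = q + 1 := ⟨n-1, by omega⟩
    rw [show 2*(k+1) = (2*k+1)+1 by ring, phi_succ, phi_succ, ih, phi_succ,
      sc_two_mul, sc_two_mul_add_one, pow_succ]
    simp only [Nat.add_sub_cancel]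
    ring

lemma phi_two_mul_add_one {n : ℕ} (hn : 1 ≤ n) (m : ℕ) :
    phi n (2*m+1) = n * phi n m + (n-1)^(sc m) := by
  rw [phi_succ, phi_two_mul hn, sc_two_mul]

lemma phi_strictMono {n : ℕ} (hn : 2 ≤ n) : StrictMono (phi n) := by
  apply strictMono_nat_of_lt_succ
  intro i
  rw [phi_succ]
  have : 0 < (n-1) ^ sc i := Nat.pow_pos (by omega)
  omega

lemma phi_pow {n : ℕ} (hn : 1 ≤ n) (k : ℕ) : phi n (2^k) = n^k := by
  induction k with
  | zero => simpa using phi_one n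
  | succ k ih => rw [pow_succ, show 2^k*2 = 2*2^k by ring, phi_two_mul hn, ih, pow_succ,
      Nat.mul_comm]

lemma sc_pow_add {k v : ℕ} (hv : v < 2^k) : sc (2^k + v) = sc v + 1 := by
  induction k generalizing v with
  | zero =>
    interval_cases v
    rw [show 2^0 + 0 = 2*0+1 by norm_num, sc_two_mul_add_one]
  | succ k ih =>
    rcases Nat.even_or_odd' v with ⟨w, rfl | rfl⟩
    · rw [show 2^(k+1) + 2*w = 2*(2^k + w) by ring, sc_two_mul, ih (by omega), sc_two_mul]
    · rw [show 2^(k+1) + (2*w+1) = 2*(2^k + w)+1 by ring, sc_two_mul_add_one, ih (by omega),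
        sc_two_mul_add_one]

lemma phi_pow_add {n : ℕ} (hn : 1 ≤ n) {k v : ℕ} (hv : v < 2^k) :
    phi n (2^k + v) = n^k + (n-1) * phi n v := by
  induction k generalizing v with
  | zero =>
    interval_cases v
    simp [phi_one, phi_zero]
  | succ k ih =>
    rcases Nat.even_or_odd' v with ⟨w, rfl | rfl⟩
    · rw [show 2^(k+1) + 2*w = 2*(2^k + w) by ring, phi_two_mul hn, ih (by omega),
        phi_two_mul hn, pow_succ]
      ring
    · rw [show 2^(k+1) + (2*w+1) = 2*(2^k + w)+1 by ring, phi_two_mul_add_one hn,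
        ih (by omega), sc_pow_add (by omega), phi_two_mul_add_one hn, pow_succ, pow_succ]
      ring
lemma phi_pow_mul {n : ℕ} (hn : 1 ≤ n) (k m : ℕ) : phi n (2^k * m) = n^k * phi n m := by
  induction k with
  | zero => simp
  | succ k ih =>
    rw [pow_succ, show 2^k*2*m = 2*(2^k*m) by ring, phi_two_mul hn, ih, pow_succ]
    ring

open Finset

lemma vcond_update {n r : ℕ} (e : Fin r → Fin n) (p : Fin r) (x : Fin n) (j : ℕ)
    (hj : (p : ℕ) ≠ j) : vcond (Function.update e p x) j = vcond e j := by
  unfold vcond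
  split
  · next h =>
    rw [Function.update_of_ne]
    exact fun hc => hj (by rw [← hc])
  · rfl

lemma edgeCond_update {n r : ℕ} (e : Fin r → Fin n) (p : Fin r) (x : Fin n) :
    ∀ (s : List Bool) (j : ℕ), (p : ℕ) < j →
      edgeCond (Function.update e p x) j s = edgeCond e j s := by
  intro s
  induction s with
  | nil => intro j hj; exact vcond_update e p x j (Nat.ne_of_lt hj)
  | cons b s ih =>
    intro j hj
    cases b <;>
      simp only [edgeCond, vcond_update e p x j (Nat.ne_of_lt hj), ih (j+1) (by omega)]

lemma fiber_card {n r : ℕ} (p : Fin r) (Q : (Fin r → Fin n) → Bool)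
    (hQ : ∀ e x, Q (Function.update e p x) = Q e) (v w : Fin n) :
    (univ.filter fun e => Q e = true ∧ e p = v).card
      = (univ.filter fun e => Q e = true ∧ e p = w).card := by
  apply Finset.card_bij (fun e _ => Function.update e p w)
  · intro e he
    simp only [mem_filter, mem_univ, true_and] at he ⊢
    exact ⟨by rw [hQ]; exact he.1, Function.update_self p w e⟩
  · intro e1 h1 e2 h2 heq
    simp only [mem_filter, mem_univ, true_and] at h1 h2
    funext i
    by_cases hip : i = p
    · subst hip; rw [h1.2, h2.2]
    · have := congrFun heq i
      rwa [Function.update_of_ne hip, Function.update_of_ne hip] at this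
  · intro f hf
    simp only [mem_filter, mem_univ, true_and] at hf
    refine ⟨Function.update f p v, ?_, ?_⟩
    · simp only [mem_filter, mem_univ, true_and]
      exact ⟨by rw [hQ]; exact hf.1, Function.update_self p v f⟩
    · rw [Function.update_idem, ← hf.2, Function.update_eq_self]

lemma card_coord_and {n r : ℕ} (p : Fin r) (Q : (Fin r → Fin n) → Bool)
    (hQ : ∀ e x, Q (Function.update e p x) = Q e) (v : Fin n) :
    n * (univ.filter fun e => Q e = true ∧ e p = v).card
      = (univ.filter fun e => Q e = true).card := by
  have h := Finset.card_eq_sum_card_fiberwise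
    (f := fun e : Fin r → Fin n => e p) (s := univ.filter fun e => Q e = true)
    (t := (univ : Finset (Fin n))) (fun x _ => mem_univ _)
  rw [h]
  have heach : ∀ w ∈ (univ : Finset (Fin n)),
      ((univ.filter fun e => Q e = true).filter fun e => e p = w).card
        = (univ.filter fun e => Q e = true ∧ e p = v).card := by
    intro w _
    rw [Finset.filter_filter]
    exact fiber_card p Q hQ w v
  rw [Finset.sum_congr rfl heach, Finset.sum_const, card_univ, Fintype.card_fin, smul_eq_mul]

lemma vcond_iff {n r : ℕ} [NeZero n] (e : Fin r → Fin n) {j : ℕ} (hj : j < r) :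
    vcond e j = true ↔ e ⟨j, hj⟩ = 0 := by
  unfold vcond
  rw [dif_pos hj]
  rw [decide_eq_true_iff, Fin.val_eq_zero_iff]

lemma card_univ_fun {n r : ℕ} : (univ : Finset (Fin r → Fin n)).card = n ^ r := by
  rw [card_univ]
  simp [Fintype.card_fun]

lemma A1 {n r : ℕ} (hn : 2 ≤ n) {j : ℕ} (hj : j < r) (Q : (Fin r → Fin n) → Bool)
    (hQ : ∀ e x, Q (Function.update e ⟨j, hj⟩ x) = Q e) :
    n * (univ.filter fun e => (vcond e j && Q e) = true).card
      = (univ.filter fun e => Q e = true).card := by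
  haveI : NeZero n := ⟨by omega⟩
  rw [show (univ.filter fun e : Fin r → Fin n => (vcond e j && Q e) = true)
      = univ.filter fun e => Q e = true ∧ e ⟨j, hj⟩ = 0 from
    filter_congr fun e _ => by
      rw [Bool.and_eq_true, vcond_iff e hj]; exact and_comm]
  exact card_coord_and ⟨j, hj⟩ Q hQ 0

lemma A0 {n r : ℕ} (hn : 2 ≤ n) {j : ℕ} (hj : j < r) :
    (univ.filter fun e : Fin r → Fin n => vcond e j = true).card = n ^ (r - 1) := by
  have h := A1 (r := r) hn hj (fun _ => true) (fun _ _ => rfl)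
  simp only [Bool.and_true] at h
  simp only [Finset.filter_true, card_univ_fun] at h
  have hr : n ^ r = n * n ^ (r-1) := by
    rw [← pow_succ']
    congr 1
    omega
  rw [hr] at h
  exact Nat.eq_of_mul_eq_mul_left (by omega) h

lemma A2 {n r : ℕ} (hn : 2 ≤ n) {j : ℕ} (hj : j < r) (Q : (Fin r → Fin n) → Bool)
    (hQ : ∀ e x, Q (Function.update e ⟨j, hj⟩ x) = Q e) :
    n * (univ.filter fun e => (!vcond e j && Q e) = true).card
      = (n - 1) * (univ.filter fun e => Q e = true).card := by
  haveI : NeZero n := ⟨by omega⟩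
  have hsplit : (univ.filter fun e : Fin r → Fin n => (vcond e j && Q e) = true).card
      + (univ.filter fun e => (!vcond e j && Q e) = true).card
      = (univ.filter fun e => Q e = true).card := by
    rw [show (univ.filter fun e : Fin r → Fin n => (vcond e j && Q e) = true)
        = (univ.filter fun e => Q e = true).filter (fun e => vcond e j = true) from by
      rw [Finset.filter_filter]
      exact filter_congr fun e _ => by rw [Bool.and_eq_true]; exact and_comm]
    rw [show (univ.filter fun e : Fin r → Fin n => (!vcond e j && Q e) = true)
        = (univ.filter fun e => Q e = true).filter (fun e => ¬ (vcond e j = true)) from by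
      rw [Finset.filter_filter]
      exact filter_congr fun e _ => by
        rw [Bool.and_eq_true, Bool.not_eq_true']
        constructor
        · rintro ⟨h1, h2⟩; exact ⟨h2, by simp [h1]⟩
        · rintro ⟨h1, h2⟩; exact ⟨by simp at h2; exact h2, h1⟩]
    exact Finset.card_filter_add_card_filter_not _
  have h1 := A1 hn hj Q hQ
  have expand : (n-1) * (univ.filter fun e => Q e = true).card
      + (univ.filter fun e => Q e = true).card
      = n * (univ.filter fun e => Q e = true).card := by
    have hh : n - 1 + 1 = n := by omega
    calc (n-1) * (univ.filter fun e => Q e = true).card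
        + (univ.filter fun e => Q e = true).card
        = (n-1+1) * (univ.filter fun e => Q e = true).card := by ring
      _ = n * (univ.filter fun e => Q e = true).card := by rw [hh]
  have final : n * (univ.filter fun e => (!vcond e j && Q e) = true).card
      + n * (univ.filter fun e => (vcond e j && Q e) = true).card
      = n * (univ.filter fun e => Q e = true).card := by
    rw [← Nat.mul_add, Nat.add_comm ((univ.filter fun e => (!vcond e j && Q e) = true).card),
      hsplit]
  rw [h1] at final
  apply Nat.add_right_cancel (m := (univ.filter fun e => Q e = true).card)
  rw [expand]
  exact final

lemma count {n r : ℕ} (hn : 2 ≤ n) :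
    ∀ (s : List Bool) (j : ℕ), j + s.length < r →
      (univ.filter fun e : Fin r → Fin n => edgeCond e j s = true).card
        = cfun n s * n ^ (r - 1 - s.length) := by
  intro s
  induction s with
  | nil =>
    intro j hj
    simp only [List.length_nil, Nat.add_zero] at hj
    simp only [edgeCond, cfun, List.length_nil, Nat.sub_zero, Nat.one_mul]
    exact A0 hn hj
  | cons b s ih =>
    intro j hj
    have hjr : j < r := by simp at hj; omega
    have hrec : (j+1) + s.length < r := by simp at hj; omega
    have ihv := ih (j+1) hrec
    have hQ : ∀ (e : Fin r → Fin n) x,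
        edgeCond (Function.update e ⟨j, hjr⟩ x) (j+1) s = edgeCond e (j+1) s :=
      fun e x => edgeCond_update e ⟨j, hjr⟩ x s (j+1) (Nat.lt_succ_self j)
    have hexp : r - 1 - s.length = (r - 1 - (s.length+1)) + 1 := by
      simp at hj; omega
    cases b
    · -- false
      simp only [edgeCond, cfun, List.length_cons]
      have h1 := A1 hn hjr (fun e => edgeCond e (j+1) s) hQ
      rw [ihv] at h1
      apply Nat.eq_of_mul_eq_mul_left (show 0 < n by omega)
      erw [h1]
      rw [hexp, pow_succ]
      ring
    · -- true
      simp only [edgeCond, cfun, List.length_cons]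
      have hsplitU : (univ.filter fun e : Fin r → Fin n => (vcond e j || edgeCond e (j+1) s) = true)
          = (univ.filter fun e => vcond e j = true)
            ∪ (univ.filter fun e => (!vcond e j && edgeCond e (j+1) s) = true) := by
        ext e
        simp only [mem_filter, mem_union, mem_univ, true_and, Bool.or_eq_true,
          Bool.and_eq_true, Bool.not_eq_true']
        cases hv : vcond e j <;> simp [hv]
      have hdisj : Disjoint (univ.filter fun e : Fin r → Fin n => vcond e j = true)
          (univ.filter fun e => (!vcond e j && edgeCond e (j+1) s) = true) := by
        rw [Finset.disjoint_left]
        intro e he1 he2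
        simp only [mem_filter, mem_univ, true_and, Bool.and_eq_true, Bool.not_eq_true'] at he1 he2
        rw [he1] at he2
        exact absurd he2.1 (by simp)
      have h2 := A2 hn hjr (fun e => edgeCond e (j+1) s) hQ
      rw [ihv] at h2
      apply Nat.eq_of_mul_eq_mul_left (show 0 < n by omega)
      obtain ⟨K, hK⟩ : ∃ K, r - 1 - (s.length+1) = K := ⟨_, rfl⟩
      have hexp2 : r - 1 - s.length = K + 1 := by simp at hj; omega
      have hr2 : r - 1 = (s.length + 1) + K := by simp at hj; omega
      erw [hsplitU]
      rw [Finset.card_union_of_disjoint hdisj, Nat.mul_add, A0 hn hjr, h2, hK, hexp2,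
        hr2, pow_add, pow_succ]
      ring


def lval : List Bool → ℕ
  | [] => 0
  | b :: s => (cond b 1 0) * 2^s.length + lval s

lemma lval_lt (s : List Bool) : lval s < 2^s.length := by
  induction s with
  | nil => simp [lval]
  | cons b s ih =>
    cases b <;> simp [lval, List.length_cons, pow_succ] <;> omega

lemma exists_list (m : ℕ) : ∀ v, v < 2^m → ∃ s : List Bool, s.length = m ∧ lval s = v := by
  induction m with
  | zero =>
    intro v hv
    interval_cases v
    exact ⟨[], rfl, rfl⟩
  | succ m ih =>
    intro v hv
    by_cases hc : v < 2^m
    · obtain ⟨s, hs1, hs2⟩ := ih v hc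
      exact ⟨false :: s, by simp [hs1], by simp [lval, hs2]⟩
    · obtain ⟨s, hs1, hs2⟩ := ih (v - 2^m) (by rw [pow_succ] at hv; omega)
      refine ⟨true :: s, by simp [hs1], ?_⟩
      simp [lval, hs1, hs2]
      omega

lemma cfun_eq {n : ℕ} (hn : 1 ≤ n) (s : List Bool) :
    cfun n s = n * phi n (lval s) + (n-1)^(sc (lval s)) := by
  induction s with
  | nil => simp [cfun, lval, phi_zero, sc_zero]
  | cons b s ih =>
    cases b
    · simpa [cfun, lval] using ih
    · have hv := lval_lt s
      simp only [cfun, lval, cond, Nat.one_mul, List.length_cons]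
      rw [ih, phi_pow_add hn hv, sc_pow_add hv, pow_succ]
      ring



open Finset

lemma mem_PsiSet {r : ℕ} (σ : List Bool) : σ ∈ PsiSet r ↔ σ.length < r := by
  simp only [PsiSet, mem_biUnion, mem_range, mem_image, mem_univ, true_and]
  constructor
  · rintro ⟨m, hm, g, rfl⟩
    simpa using hm
  · intro h
    exact ⟨σ.length, h, σ.get, List.ofFn_get σ⟩

lemma fval_eq_phi {n r : ℕ} (hn : 2 ≤ n) (σ : List Bool) (hσ : σ.length < r) :
    fval n r σ = phi n ((2 * lval σ + 1) * 2 ^ (r - 1 - σ.length)) := by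
  have hn1 : 1 ≤ n := by omega
  rw [fval, Fset, count hn σ 0 (by omega)]
  rw [Nat.mul_comm (2 * lval σ + 1), phi_pow_mul hn1, phi_two_mul_add_one hn1,
    cfun_eq hn1 σ]
  ring

lemma Nvals_eq {n r : ℕ} (hn : 2 ≤ n) :
    Nvals n r = (Finset.range (2^r + 1)).image (phi n) := by
  have hn1 : 1 ≤ n := by omega
  ext t
  simp only [Nvals, mem_insert, mem_image, mem_range]
  constructor
  · rintro (rfl | rfl | ⟨σ, hσ, rfl⟩)
    · exact ⟨0, by positivity, phi_zero n⟩
    · exact ⟨2^r, by omega, phi_pow hn1 r⟩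
    · rw [mem_PsiSet] at hσ
      refine ⟨(2 * lval σ + 1) * 2 ^ (r - 1 - σ.length), ?_, (fval_eq_phi hn σ hσ).symm⟩
      have h1 : lval σ < 2 ^ σ.length := lval_lt σ
      have h2 : 2 * lval σ + 1 < 2 ^ (σ.length + 1) := by rw [pow_succ]; omega
      have h3 : (2 * lval σ + 1) * 2 ^ (r - 1 - σ.length)
          < 2 ^ (σ.length + 1) * 2 ^ (r - 1 - σ.length) :=
        (Nat.mul_lt_mul_right (Nat.pow_pos (by omega))).mpr h2
      have h4 : 2 ^ (σ.length + 1) * 2 ^ (r - 1 - σ.length) = 2 ^ r := by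
        rw [← pow_add]; congr 1; omega
      omega
  · rintro ⟨i, hi, rfl⟩
    by_cases h0 : i = 0
    · subst h0; left; exact phi_zero n
    · by_cases hr : i = 2^r
      · subst hr; right; left; exact phi_pow hn1 r
      · right; right
        obtain ⟨k, m, hodd, him⟩ := Nat.exists_eq_two_pow_mul_odd h0
        obtain ⟨v, rfl⟩ := hodd
        have hkr : k < r := by
          have h2k : 2^k ≤ 2^k * (2*v+1) := Nat.le_mul_of_pos_right _ (by omega)
          have : 2^k < 2^r := by omega
          exact (Nat.pow_lt_pow_iff_right (by omega)).mp this
        have hvlt : v < 2 ^ (r - 1 - k) := by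
          have : 2^k * (2*v+1) < 2^r := by omega
          have hsplit : 2^r = 2^k * 2^(r-k) := by rw [← pow_add]; congr 1; omega
          rw [hsplit] at this
          have h5 : 2*v+1 < 2^(r-k) := Nat.lt_of_mul_lt_mul_left this
          have h6 : r - k = (r - 1 - k) + 1 := by omega
          rw [h6, pow_succ] at h5
          omega
        obtain ⟨σ, hlen, hval⟩ := exists_list (r - 1 - k) v hvlt
        refine ⟨σ, (mem_PsiSet σ).mpr (by omega), ?_⟩
        rw [fval_eq_phi hn σ (by omega), hval, hlen]
        rw [him]
        have hk2 : r - 1 - (r - 1 - k) = k := by omega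
        rw [hk2]
        congr 1
        ring

lemma sort_image {f : ℕ → ℕ} (hf : StrictMono f) (N : ℕ) :
    Finset.sort ((Finset.range N).image f) (· ≤ ·) = (List.range N).map f := by
  refine List.Perm.eq_of_pairwise' (r := (· ≤ ·)) (Finset.pairwise_sort _ _) ?_ ?_
  swap
  · apply List.perm_of_nodup_nodup_toFinset_eq
    · exact Finset.sort_nodup _ _
    · exact (List.nodup_range (n := N)).map hf.injective
    · rw [Finset.sort_toFinset]
      ext x
      simp
  · exact List.Pairwise.map f (fun a b h => hf.monotone h) (List.pairwise_le_range (n := N))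


lemma Nseq_eq {n r : ℕ} (hn : 2 ≤ n) {i : ℕ} (hi : i ≤ 2^r) : Nseq n r i = phi n i := by
  rw [Nseq, Nvals_eq hn, sort_image (phi_strictMono hn)]
  rw [List.getD_eq_getElem?_getD, List.getElem?_map, List.getElem?_range (by omega)]
  rfl


theorem stmt7 (n r i j : ℕ) (hn : 2 ≤ n) (hij : i ≤ j) (hsum : i + j ≤ 2 ^ r) :
    ((n : ℤ) - 1) * (Nseq n r i : ℤ) ≤ (Nseq n r (j + i) : ℤ) - (Nseq n r j : ℤ) := by
  have hi : i ≤ 2^r := by omega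
  have hj : j ≤ 2^r := by omega
  have hji : j + i ≤ 2^r := by omega
  rw [Nseq_eq hn hi, Nseq_eq hn hj, Nseq_eq hn hji]
  have hn2 : (2:ℤ) ≤ (n:ℤ) := by exact_mod_cast hn
  have hq : (1:ℤ) ≤ (n:ℤ) - 1 := by linarith
  obtain ⟨hA, -, -, -⟩ := key ((n:ℤ)-1) hq (i+j) i j rfl hij
  have hcast : ∀ m : ℕ, (phi n m : ℤ) = Sz ((n:ℤ)-1) m := by
    intro m
    rw [phi, Sz]
    push_cast [Nat.cast_sub (show 1 ≤ n by omega)]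
    ring
  rw [show j + i = i + j by ring, hcast, hcast, hcast]
  linarith
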